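/- Let G be a finite group and α a U(1)-valued 2-cocycle. In the α-twisted group algebra ℂ^α[G] (with product |g⟩·|g'⟩ = α(g,g')|gg'⟩), the element Ψ_g := Σ_{x ∈ G} (α(x,g)α(xg,x⁻¹)/α(x,x⁻¹)) |xgx⁻¹⟩ lies in the center: |g'⟩·Ψ_g = Ψ_g·|g'⟩ for all g' ∈ G. Moreover Ψ_g = 0 unless g is α-regular. -/

import Mathlib

/-- In the α-twisted group algebra, Ψ_g := Σ_x (α(x,g)α(xg,x⁻¹)/α(x,x⁻¹))|xgx⁻¹⟩
is central, and Ψ_g = 0 unless g is α-regular. -/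
theorem twisted_center_element {G : Type*} [Group G] [Fintype G] [DecidableEq G]
    (α : G → G → ℂ) (hnorm : ∀ g g', ‖α g g'‖ = 1)
    (hcoc : ∀ g g' g'', α g g' * α (g * g') g'' = α g (g' * g'') * α g' g'')
    (g : G) :
    let bas : G → (G → ℂ) := fun k h => if h = k then 1 else 0
    let tmul : (G → ℂ) → (G → ℂ) → (G → ℂ) := fun f₁ f₂ k =>
      ∑ a : G, ∑ b : G, if a * b = k then α a b * f₁ a * f₂ b else 0
    let Ψ : G → ℂ :=
      ∑ x : G, (α x g * α (x * g) x⁻¹ / α x x⁻¹) • bas (x * g * x⁻¹)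
    (∀ g' : G, tmul (bas g') Ψ = tmul Ψ (bas g')) ∧
    ((¬ ∀ h : G, g * h = h * g → α g h = α h g) → Ψ = 0) := by
  intro bas tmul Ψ
  have hne : ∀ a b : G, α a b ≠ 0 := by
    intro a b h
    have := hnorm a b
    rw [h] at this; simp at this
  have h11 : ∀ m : G, α m 1 = α 1 1 := by
    intro m
    have := hcoc m 1 1
    simp at this
    exact this.resolve_right (hne m 1)
  have h11' : ∀ m : G, α 1 m = α 1 1 := by
    intro m
    have := hcoc 1 1 m
    simp at this
    exact (this.resolve_right (hne 1 m)).symm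
  have hinv : ∀ m : G, α m m⁻¹ = α m⁻¹ m := by
    intro m
    have := hcoc m m⁻¹ m
    simp [h11, h11'] at this
    rw [mul_comm (α 1 1)] at this
    exact mul_right_cancel₀ (hne 1 1) this
  set c : G → ℂ := fun x => α x g * α (x * g) x⁻¹ / α x x⁻¹ with hc
  have hΨ : ∀ m : G, Ψ m = ∑ x : G, c x * (if m = x * g * x⁻¹ then 1 else 0) := by
    intro m
    simp only [Ψ, bas, Finset.sum_apply, Pi.smul_apply, smul_eq_mul, hc]
  have collapse₁ : ∀ (w k : G) (f : G → ℂ),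
      (∑ a : G, ∑ b : G, if a * b = k then α a b * bas w a * f b else 0)
        = ∑ b : G, if w * b = k then α w b * f b else 0 := by
    intro w k f
    rw [Finset.sum_eq_single w]
    · simp [bas]
    · intro a _ ha
      apply Finset.sum_eq_zero
      intro b _
      simp [bas, ha]
    · simp
  have collapse₂ : ∀ (w k : G) (f : G → ℂ),
      (∑ a : G, ∑ b : G, if a * b = k then α a b * f a * bas w b else 0)
        = ∑ a : G, if a * w = k then α a w * f a else 0 := by
    intro w k f
    rw [Finset.sum_comm]
    rw [Finset.sum_eq_single w]
    · apply Finset.sum_congr rfl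
      intro a _
      simp [bas]
    · intro b _ hb
      apply Finset.sum_eq_zero
      intro a _
      simp [bas, hb]
    · simp
  have collapse₃ : ∀ (w k : G) (d : G → ℂ),
      (∑ b : G, if w * b = k then α w b * (∑ x : G, d x * (if b = x * g * x⁻¹ then 1 else 0)) else 0)
        = ∑ x : G, if w * (x * g * x⁻¹) = k then α w (x * g * x⁻¹) * d x else 0 := by
    intro w k d
    have step : ∀ b : G, (if w * b = k then α w b * (∑ x : G, d x * (if b = x * g * x⁻¹ then 1 else 0)) else 0)
        = ∑ x : G, if b = x * g * x⁻¹ then (if w * b = k then α w b * d x else 0) else 0 := by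
      intro b
      by_cases h : w * b = k
      · rw [if_pos h, Finset.mul_sum]
        refine Finset.sum_congr rfl fun x _ => ?_
        by_cases hb : b = x * g * x⁻¹
        · rw [if_pos hb, if_pos hb, if_pos h, mul_one]
        · rw [if_neg hb, if_neg hb, mul_zero, mul_zero]
      · rw [if_neg h]
        refine (Finset.sum_eq_zero fun x _ => ?_).symm
        by_cases hb : b = x * g * x⁻¹
        · rw [if_pos hb, if_neg h]
        · rw [if_neg hb]
    simp only [step]
    rw [Finset.sum_comm]
    refine Finset.sum_congr rfl fun x _ => ?_
    rw [Finset.sum_eq_single (x * g * x⁻¹)]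
    · rw [if_pos rfl]
    · intro b _ hb
      rw [if_neg hb]
    · intro habs
      exact absurd (Finset.mem_univ _) habs
  have collapse₄ : ∀ (w k : G) (d : G → ℂ),
      (∑ b : G, if b * w = k then α b w * (∑ x : G, d x * (if b = x * g * x⁻¹ then 1 else 0)) else 0)
        = ∑ x : G, if (x * g * x⁻¹) * w = k then α (x * g * x⁻¹) w * d x else 0 := by
    intro w k d
    have step : ∀ b : G, (if b * w = k then α b w * (∑ x : G, d x * (if b = x * g * x⁻¹ then 1 else 0)) else 0)
        = ∑ x : G, if b = x * g * x⁻¹ then (if b * w = k then α b w * d x else 0) else 0 := by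
      intro b
      by_cases h : b * w = k
      · rw [if_pos h, Finset.mul_sum]
        refine Finset.sum_congr rfl fun x _ => ?_
        by_cases hb : b = x * g * x⁻¹
        · rw [if_pos hb, if_pos hb, if_pos h, mul_one]
        · rw [if_neg hb, if_neg hb, mul_zero, mul_zero]
      · rw [if_neg h]
        refine (Finset.sum_eq_zero fun x _ => ?_).symm
        by_cases hb : b = x * g * x⁻¹
        · rw [if_pos hb, if_neg h]
        · rw [if_neg hb]
    simp only [step]
    rw [Finset.sum_comm]
    refine Finset.sum_congr rfl fun x _ => ?_
    rw [Finset.sum_eq_single (x * g * x⁻¹)]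
    · rw [if_pos rfl]
    · intro b _ hb
      rw [if_neg hb]
    · intro habs
      exact absurd (Finset.mem_univ _) habs
  constructor
  · -- centrality
    intro g'
    funext k
    have e1 : tmul (bas g') Ψ k
        = ∑ x : G, if g' * (x * g * x⁻¹) = k then α g' (x * g * x⁻¹) * c x else 0 := by
      show (∑ a : G, ∑ b : G, if a * b = k then α a b * bas g' a * Ψ b else 0) = _
      rw [collapse₁ g' k Ψ]
      simp only [hΨ]
      exact collapse₃ g' k c
    have e2 : tmul Ψ (bas g') k
        = ∑ x : G, if (x * g * x⁻¹) * g' = k then α (x * g * x⁻¹) g' * c x else 0 := by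
      show (∑ a : G, ∑ b : G, if a * b = k then α a b * Ψ a * bas g' b else 0) = _
      rw [collapse₂ g' k Ψ]
      simp only [hΨ]
      exact collapse₄ g' k c
    rw [e1, e2]
    -- star identity
    have star : ∀ y : G,
        α g' (y * (g * y⁻¹)) * (α y g * α (y * g) y⁻¹ / α y y⁻¹)
          = α (g' * (y * (g * (y⁻¹ * g'⁻¹)))) g'
            * (α (g' * y) g * α (g' * (y * g)) (y⁻¹ * g'⁻¹) / α (g' * y) (y⁻¹ * g'⁻¹)) := by
      intro y
      have hA1 := hcoc g' y g
      have hA2 := hcoc g' (y * g) y⁻¹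
      have hB := hcoc g' y y⁻¹
      have hD := hcoc (g' * (y * g)) y⁻¹ g'⁻¹
      have hE := hcoc (g' * y) y⁻¹ g'⁻¹
      have hF := hcoc (g' * (y * (g * y⁻¹))) g'⁻¹ g'
      have hG := hinv g'
      simp only [mul_assoc, mul_inv_rev, inv_inv, mul_inv_cancel_left, inv_mul_cancel_left,
        mul_inv_cancel, inv_mul_cancel, mul_one, one_mul, h11, h11'] at hA1 hA2 hB hD hE hF
      have big :
          (α g' (y * (g * y⁻¹)) * (α y g * α (y * g) y⁻¹) * α (g' * y) (y⁻¹ * g'⁻¹))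
              * (α (g' * y) y⁻¹ * α g' g'⁻¹)
            = (α (g' * (y * (g * (y⁻¹ * g'⁻¹)))) g'
                * (α (g' * y) g * α (g' * (y * g)) (y⁻¹ * g'⁻¹)) * α y y⁻¹)
              * (α (g' * y) y⁻¹ * α g' g'⁻¹) := by
        linear_combination
          (-(α y g * α (g' * y) (y⁻¹ * g'⁻¹) * α (g' * y) y⁻¹ * α g' g'⁻¹)) * hA2
          + (-(α (g' * (y * g)) y⁻¹ * α (g' * y) (y⁻¹ * g'⁻¹) * α (g' * y) y⁻¹ * α g' g'⁻¹)) * hA1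
          + (α (g' * y) g * α (g' * (y * g)) y⁻¹ * α (g' * y) (y⁻¹ * g'⁻¹) * α g' g'⁻¹) * hB
          + (α 1 1 * α y y⁻¹ * α (g' * y) g * α (g' * (y * g)) y⁻¹ * α (g' * y) (y⁻¹ * g'⁻¹)) * hG
          + (-(α y y⁻¹ * α (g' * y) g * α (g' * (y * g)) y⁻¹ * α (g' * y) (y⁻¹ * g'⁻¹))) * hF
          + (α (g' * (y * (g * (y⁻¹ * g'⁻¹)))) g' * α y y⁻¹ * α (g' * y) g * α (g' * y) (y⁻¹ * g'⁻¹)) * hD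
          + (-(α (g' * (y * (g * (y⁻¹ * g'⁻¹)))) g' * α (g' * (y * g)) (y⁻¹ * g'⁻¹) * α y y⁻¹ * α (g' * y) g)) * hE
      have goal' := mul_right_cancel₀ (mul_ne_zero (hne (g' * y) y⁻¹) (hne g' g'⁻¹)) big
      rw [← mul_div_assoc, ← mul_div_assoc,
        div_eq_div_iff (hne y y⁻¹) (hne (g' * y) (y⁻¹ * g'⁻¹))]
      linear_combination goal'
    apply Fintype.sum_equiv (Equiv.mulLeft g')
    intro x
    have hcond : (g' * x) * g * (g' * x)⁻¹ * g' = g' * (x * g * x⁻¹) := by group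
    simp only [Equiv.coe_mulLeft]
    simp only [hcond]
    by_cases hk : g' * (x * g * x⁻¹) = k
    · rw [if_pos hk, if_pos hk]
      have := star x
      simp only [hc]
      simp only [mul_assoc, mul_inv_rev, inv_inv] at this ⊢
      exact this
    · rw [if_neg hk, if_neg hk]
  · -- vanishing for non-regular g
    intro hreg
    push_neg at hreg
    obtain ⟨h, hgh, hαne⟩ := hreg
    funext m
    show Ψ m = 0
    rw [hΨ m]
    set S := ∑ x : G, c x * (if m = x * g * x⁻¹ then 1 else 0) with hS
    have hgh' : h * g = g * h := hgh.symm
    have key2 : ∀ x : G, α g h * c (x * h) = α h g * c x := by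
      intro x
      have i1 := hcoc x h g
      have i2 := hcoc x g h
      have i3 := hcoc (x * g) h (h⁻¹ * x⁻¹)
      have i4 := hcoc x h (h⁻¹ * x⁻¹)
      simp only [mul_assoc, mul_inv_rev, inv_inv, mul_inv_cancel_left, inv_mul_cancel_left,
        mul_inv_cancel, inv_mul_cancel, mul_one, one_mul, hgh'] at i1 i2 i3 i4
      have bigK :
          (α g h * α (x * h) g * α (x * (g * h)) (h⁻¹ * x⁻¹) * α x x⁻¹)
              * (α x h * α (x * g) h)
            = (α h g * α x g * α (x * g) x⁻¹ * α (x * h) (h⁻¹ * x⁻¹))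
              * (α x h * α (x * g) h) := by
        linear_combination
          (α g h * α (x * (g * h)) (h⁻¹ * x⁻¹) * α x x⁻¹ * α (x * g) h) * i1
          + (α g h * α x (g * h) * α h g * α x x⁻¹) * i3
          + (-(α h g * α (x * g) x⁻¹ * α x h * α (x * h) (h⁻¹ * x⁻¹))) * i2
          + (-(α h g * α x (g * h) * α g h * α (x * g) x⁻¹)) * i4
      have K := mul_right_cancel₀ (mul_ne_zero (hne x h) (hne (x * g) h)) bigK
      simp only [hc]
      simp only [mul_assoc, mul_inv_rev, inv_inv, hgh']
      rw [← mul_div_assoc, ← mul_div_assoc,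
        div_eq_div_iff (hne (x * h) (h⁻¹ * x⁻¹)) (hne x x⁻¹)]
      linear_combination K
    have reindex : S = ∑ x : G, c (x * h) * (if m = x * g * x⁻¹ then 1 else 0) := by
      rw [hS]
      apply Fintype.sum_equiv (Equiv.mulRight h⁻¹)
      intro x
      simp only [Equiv.coe_mulRight]
      have h1 : x * h⁻¹ * h = x := by group
      have h2 : (x * h⁻¹) * g * (x * h⁻¹)⁻¹ = x * g * x⁻¹ := by
        have h3 : h⁻¹ * g * h = g := by rw [mul_assoc, hgh, inv_mul_cancel_left]
        calc (x * h⁻¹) * g * (x * h⁻¹)⁻¹ = x * (h⁻¹ * g * h) * x⁻¹ := by group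
        _ = x * g * x⁻¹ := by rw [h3]
      rw [h1]
      simp only [h2]
    have hmul : α g h * S = α h g * S := by
      calc α g h * S = ∑ x : G, α g h * (c (x * h) * (if m = x * g * x⁻¹ then 1 else 0)) := by
            rw [reindex, Finset.mul_sum]
      _ = ∑ x : G, α h g * (c x * (if m = x * g * x⁻¹ then 1 else 0)) := by
            refine Finset.sum_congr rfl fun x _ => ?_
            rw [← mul_assoc, ← mul_assoc, key2 x]
      _ = α h g * S := by rw [hS, Finset.mul_sum]
    have : (α g h - α h g) * S = 0 := by ring_nf; linear_combination hmul
    rcases mul_eq_zero.mp this with h0 | h0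
    · exact absurd (sub_eq_zero.mp h0) hαne
    · exact h0
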